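/- Let A = ℂ[X₁,…,Xₙ], f ∈ A squarefree with B = A/(f) smooth, and let ψ : B → Â be a ring section of the projection Â → B, where Â is the (f)-adic completion of A. Then the map ψ̂ : B[[T]] → Â defined by ∑ν bν T^ν ↦ ∑ν ψ(bν) f^ν is a ring isomorphism. -/

import Mathlib

open MvPolynomial

/-- The `(f)`-adic completion of a commutative `ℂ`-algebra `A`, realized as the
subalgebra of compatible families in `∀ ν, A ⧸ (f^ν)`. -/
def adicCompl (A : Type) [CommRing A] [Algebra ℂ A] (f : A) :
    Subalgebra ℂ (∀ ν : ℕ, A ⧸ Ideal.span {f ^ ν}) where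
  carrier := {x | ∀ ν : ℕ,
    Ideal.Quotient.factor (S := Ideal.span {f ^ (ν + 1)}) (T := Ideal.span {f ^ ν})
      (Ideal.span_singleton_le_span_singleton.mpr (pow_dvd_pow f (Nat.le_succ ν)))
      (x (ν + 1)) = x ν}
  mul_mem' := by
    intro a b ha hb ν
    simp only [Pi.mul_apply, map_mul, ha ν, hb ν]
  add_mem' := by
    intro a b ha hb ν
    simp only [Pi.add_apply, map_add, ha ν, hb ν]
  algebraMap_mem' := fun r ν => rfl

/-- The canonical projection from the `(f)`-adic completion onto `B = A/(f)`. -/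
def adicComplProj (A : Type) [CommRing A] [Algebra ℂ A] (f : A) :
    adicCompl A f →+* A ⧸ Ideal.span {f} :=
  (Ideal.Quotient.factor (S := Ideal.span {f ^ 1}) (T := Ideal.span {f})
      (le_of_eq (by rw [pow_one]))).comp
    ((Pi.evalRingHom _ 1).comp (adicCompl A f).val.toRingHom)

set_option linter.unusedSectionVars false

namespace Lemma36

variable {A : Type} [CommRing A] [Algebra ℂ A] (f : A)

/-- evaluation at level `ν`. -/
def eps (ν : ℕ) : adicCompl A f →+* A ⧸ Ideal.span {f ^ ν} :=
  (Pi.evalRingHom _ ν).comp (adicCompl A f).val.toRingHom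

@[simp] lemma eps_apply (ν : ℕ) (x : adicCompl A f) : eps f ν x = x.val ν := rfl

/-- the transition map. -/
def fac (ν : ℕ) : (A ⧸ Ideal.span {f ^ (ν + 1)}) →+* A ⧸ Ideal.span {f ^ ν} :=
  Ideal.Quotient.factor
    (Ideal.span_singleton_le_span_singleton.mpr (pow_dvd_pow f (Nat.le_succ ν)))

@[simp] lemma fac_mk (ν : ℕ) (r : A) :
    fac f ν (Ideal.Quotient.mk _ r) = Ideal.Quotient.mk _ r :=
  Ideal.Quotient.factor_mk _ r

lemma fac_val (ν : ℕ) (x : adicCompl A f) : fac f ν (x.val (ν + 1)) = x.val ν :=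
  (id x.2 : ∀ ν : ℕ, fac f ν (x.val (ν + 1)) = x.val ν) ν

lemma val_eq_of_le (x : adicCompl A f) (r : A) :
    ∀ κ, x.val κ = Ideal.Quotient.mk _ r → ∀ ν, ν ≤ κ → x.val ν = Ideal.Quotient.mk _ r := by
  intro κ
  induction κ with
  | zero => intro h ν hν; interval_cases ν; exact h
  | succ κ ih =>
      intro h ν hν
      rcases Nat.lt_or_ge ν (κ + 1) with h' | h'
      · exact ih (by rw [← fac_val f κ x, h, fac_mk]) ν (by omega)
      · have : ν = κ + 1 := by omega
        subst this; exact h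

lemma c_pow (ν : ℕ) : (Ideal.Quotient.mk (Ideal.span {f ^ ν}) f) ^ ν = 0 := by
  rw [← map_pow, Ideal.Quotient.eq_zero_iff_mem]
  exact Ideal.subset_span rfl


/-- multiplication by `f`, from level `ν` to level `ν+1`. -/
def mulf (ν : ℕ) : (A ⧸ Ideal.span {f ^ ν}) →ₗ[A] A ⧸ Ideal.span {f ^ (ν + 1)} :=
  Submodule.mapQ _ _ (LinearMap.lsmul A A f) (by
    intro r hr
    rw [Ideal.mem_span_singleton] at hr
    rw [Submodule.mem_comap, LinearMap.lsmul_apply, smul_eq_mul]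
    rw [Ideal.mem_span_singleton, pow_succ']
    exact mul_dvd_mul_left f hr)

@[simp] lemma mulf_mk (ν : ℕ) (r : A) :
    mulf f ν (Ideal.Quotient.mk _ r) = Ideal.Quotient.mk _ (f * r) := by
  show Submodule.mapQ _ _ _ _ (Submodule.Quotient.mk r) = _
  rw [Submodule.mapQ_apply]
  rfl

lemma mulf_fac (ν : ℕ) (v : A ⧸ Ideal.span {f ^ (ν + 1)}) :
    mulf f ν (fac f ν v) = Ideal.Quotient.mk _ f * v := by
  obtain ⟨r, rfl⟩ := Ideal.Quotient.mk_surjective v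
  rw [fac_mk, mulf_mk, ← map_mul]

lemma fac_mulf (ν : ℕ) (u : A ⧸ Ideal.span {f ^ (ν + 1)}) :
    fac f (ν + 1) (mulf f (ν + 1) u) = mulf f ν (fac f ν u) := by
  obtain ⟨r, rfl⟩ := Ideal.Quotient.mk_surjective u
  simp

variable [IsDomain A]

lemma mulf_injective (hf : f ≠ 0) (ν : ℕ) : Function.Injective (mulf f ν) := by
  intro w w' h
  obtain ⟨s, rfl⟩ := Ideal.Quotient.mk_surjective w
  obtain ⟨s', rfl⟩ := Ideal.Quotient.mk_surjective w'
  rw [mulf_mk, mulf_mk, Ideal.Quotient.mk_eq_mk_iff_sub_mem, ← mul_sub,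
    Ideal.mem_span_singleton, pow_succ'] at h
  rw [Ideal.Quotient.mk_eq_mk_iff_sub_mem, Ideal.mem_span_singleton]
  exact (mul_dvd_mul_iff_left hf).mp h


lemma eval₂_trunc_coe {R S : Type*} [CommSemiring R] [CommRing S] (σ : R →+* S) (c : S)
    (ν : ℕ) (hc : c ^ ν = 0) (P : Polynomial R) :
    Polynomial.eval₂ σ c (PowerSeries.trunc ν (P : PowerSeries R)) = Polynomial.eval₂ σ c P := by
  rw [PowerSeries.eval₂_trunc_eq_sum_range, Polynomial.eval₂_eq_sum_range]
  have h1 : ∑ i ∈ Finset.range ν, σ ((PowerSeries.coeff i) ↑P) * c ^ i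
      = ∑ i ∈ Finset.range (max ν (P.natDegree + 1)), σ (P.coeff i) * c ^ i := by
    rw [Finset.sum_subset (Finset.range_subset_range.mpr (le_max_left _ _))]
    · exact Finset.sum_congr rfl fun i _ => by rw [Polynomial.coeff_coe]
    · intro i _ hi
      rw [Finset.mem_range, not_lt] at hi
      have : c ^ i = 0 := by
        rw [← Nat.add_sub_cancel' hi, pow_add, hc, zero_mul]
      rw [this, mul_zero]
  have h2 : ∑ i ∈ Finset.range (P.natDegree + 1), σ (P.coeff i) * c ^ i
      = ∑ i ∈ Finset.range (max ν (P.natDegree + 1)), σ (P.coeff i) * c ^ i := by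
    refine Finset.sum_subset (Finset.range_subset_range.mpr (le_max_right _ _)) ?_
    intro i _ hi
    rw [Finset.mem_range, not_lt] at hi
    rw [Polynomial.coeff_eq_zero_of_natDegree_lt (by omega), map_zero, zero_mul]
  rw [h1, h2]

variable (ψ : (A ⧸ Ideal.span {f}) →+* adicCompl A f)

noncomputable def preFun (g : PowerSeries (A ⧸ Ideal.span {f})) (ν : ℕ) :
    A ⧸ Ideal.span {f ^ ν} :=
  Polynomial.eval₂ ((eps f ν).comp ψ) (Ideal.Quotient.mk _ f) (PowerSeries.trunc ν g)

lemma preFun_eq (g : PowerSeries (A ⧸ Ideal.span {f})) (ν : ℕ) :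
    preFun f ψ g ν = ∑ μ ∈ Finset.range ν,
      (ψ (PowerSeries.coeff μ g)).val ν *
        (Ideal.Quotient.mk (Ideal.span {f ^ ν}) f) ^ μ :=
  PowerSeries.eval₂_trunc_eq_sum_range _ _ _ _

lemma preFun_mem (g : PowerSeries (A ⧸ Ideal.span {f})) :
    ∀ ν, fac f ν (preFun f ψ g (ν + 1)) = preFun f ψ g ν := by
  intro ν
  rw [preFun_eq, preFun_eq, map_sum, Finset.sum_range_succ]
  have last : fac f ν ((ψ (PowerSeries.coeff ν g)).val (ν + 1) *
      (Ideal.Quotient.mk (Ideal.span {f ^ (ν + 1)}) f) ^ ν) = 0 := by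
    rw [map_mul, map_pow, fac_mk]
    have : fac f ν ((ψ (PowerSeries.coeff ν g)).val (ν + 1)) = (ψ _).val ν :=
      fac_val f ν _
    rw [this, c_pow, mul_zero]
  rw [last, add_zero]
  refine Finset.sum_congr rfl fun μ _ => ?_
  rw [map_mul, map_pow, fac_mk, fac_val]

/-- the ring homomorphism `B[[T]] → Â`. -/
noncomputable def Phi0 : PowerSeries (A ⧸ Ideal.span {f}) →+* adicCompl A f where
  toFun g := ⟨preFun f ψ g, preFun_mem f ψ g⟩
  map_one' := by
    apply Subtype.ext; funext ν
    show preFun f ψ 1 ν = _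
    cases ν with
    | zero =>
        have : Subsingleton (A ⧸ Ideal.span {f ^ 0}) := by
          rw [Ideal.Quotient.subsingleton_iff]
          simp [Ideal.span_singleton_one]
        exact Subsingleton.elim _ _
    | succ ν =>
        rw [preFun, PowerSeries.trunc_one, Polynomial.eval₂_one]
        rfl
  map_mul' g h := by
    apply Subtype.ext; funext ν
    show preFun f ψ (g * h) ν = preFun f ψ g ν * preFun f ψ h ν
    unfold preFun
    rw [← PowerSeries.trunc_trunc_mul_trunc, ← Polynomial.coe_mul,
      eval₂_trunc_coe _ _ ν (c_pow f ν), Polynomial.eval₂_mul]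
  map_zero' := by
    apply Subtype.ext; funext ν
    show preFun f ψ 0 ν = _
    rw [preFun, map_zero, Polynomial.eval₂_zero]
    rfl
  map_add' g h := by
    apply Subtype.ext; funext ν
    show preFun f ψ (g + h) ν = preFun f ψ g ν + preFun f ψ h ν
    rw [preFun, preFun, preFun, map_add, Polynomial.eval₂_add]


lemma sect_zero (hf : f ≠ 0) (hψ : (adicComplProj A f).comp ψ = RingHom.id _)
    (b : A ⧸ Ideal.span {f}) (μ : ℕ)
    (h : (ψ b).val (μ + 1) * (Ideal.Quotient.mk (Ideal.span {f ^ (μ + 1)}) f) ^ μ = 0) :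
    b = 0 := by
  obtain ⟨r, hr⟩ := Ideal.Quotient.mk_surjective ((ψ b).val (μ + 1))
  have h2 : f ^ (μ + 1) ∣ r * f ^ μ := by
    rw [← Ideal.mem_span_singleton, ← Ideal.Quotient.eq_zero_iff_mem, map_mul, map_pow, hr]
    exact h
  obtain ⟨t, ht⟩ := h2
  have hfr : f ∣ r := by
    refine ⟨t, mul_right_cancel₀ (pow_ne_zero μ hf) ?_⟩
    rw [ht]; ring
  have hsec : adicComplProj A f (ψ b) = b := RingHom.congr_fun hψ b
  have hv1 : (ψ b).val 1 = Ideal.Quotient.mk _ r :=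
    val_eq_of_le f (ψ b) r (μ + 1) hr.symm 1 (by omega)
  have : adicComplProj A f (ψ b) =
      Ideal.Quotient.factor (S := Ideal.span {f ^ 1}) (T := Ideal.span {f})
        (le_of_eq (by rw [pow_one])) ((ψ b).val 1) := rfl
  rw [this, hv1, Ideal.Quotient.factor_mk] at hsec
  rw [← hsec, Ideal.Quotient.eq_zero_iff_mem, Ideal.mem_span_singleton]
  exact hfr

lemma Phi0_injective (hf : f ≠ 0) (hψ : (adicComplProj A f).comp ψ = RingHom.id _) :
    Function.Injective (Phi0 f ψ) := by
  intro g₁ g₂ hgeq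
  rw [← sub_eq_zero]
  set g := g₁ - g₂ with hgdef
  have hg : Phi0 f ψ g = 0 := by rw [hgdef, (Phi0 f ψ).map_sub, hgeq, sub_self]
  ext μ
  rw [map_zero]
  induction μ using Nat.strong_induction_on with
  | _ μ ih =>
    have hv : preFun f ψ g (μ + 1) = 0 := by
      have h1 := congrArg Subtype.val hg
      exact congrFun h1 (μ + 1)
    rw [preFun_eq, Finset.sum_range_succ] at hv
    have hzero : ∀ k ∈ Finset.range μ, (ψ (PowerSeries.coeff k g)).val (μ + 1) *
        (Ideal.Quotient.mk (Ideal.span {f ^ (μ + 1)}) f) ^ k = 0 := by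
      intro k hk
      rw [Finset.mem_range] at hk
      rw [ih k hk, map_zero, ZeroMemClass.coe_zero, Pi.zero_apply, zero_mul]
    rw [Finset.sum_eq_zero hzero, zero_add] at hv
    exact sect_zero f ψ hf hψ _ μ hv


lemma exists_shift (hf : f ≠ 0) (z : adicCompl A f) (hz : z.val 1 = 0) :
    ∃ y : adicCompl A f, ∀ ν, mulf f ν (y.val ν) = z.val (ν + 1) := by
  have ex : ∀ ν, ∃ w : A ⧸ Ideal.span {f ^ ν}, mulf f ν w = z.val (ν + 1) := by
    intro ν
    obtain ⟨r, hr⟩ := Ideal.Quotient.mk_surjective (z.val (ν + 1))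
    have h1 : z.val 1 = Ideal.Quotient.mk _ r :=
      val_eq_of_le f z r (ν + 1) hr.symm 1 (by omega)
    have hfr : f ∣ r := by
      have h2 : r ∈ Ideal.span {f ^ 1} := by
        rw [← Ideal.Quotient.eq_zero_iff_mem, ← h1, hz]
      rwa [Ideal.mem_span_singleton, pow_one] at h2
    obtain ⟨s, rfl⟩ := hfr
    exact ⟨Ideal.Quotient.mk _ s, by rw [mulf_mk, hr]⟩
  choose w hw using ex
  refine ⟨⟨w, ?_⟩, fun ν => hw ν⟩
  show ∀ ν : ℕ, fac f ν (w (ν + 1)) = w ν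
  intro ν
  show fac f ν (w (ν + 1)) = w ν
  apply mulf_injective f hf ν
  calc mulf f ν (fac f ν (w (ν + 1)))
      = fac f (ν + 1) (mulf f (ν + 1) (w (ν + 1))) := (fac_mulf f ν _).symm
    _ = fac f (ν + 1) (z.val (ν + 2)) := by rw [hw]
    _ = z.val (ν + 1) := fac_val f (ν + 1) z
    _ = mulf f ν (w ν) := (hw ν).symm

lemma sub_val1 (hψ : (adicComplProj A f).comp ψ = RingHom.id _) (x : adicCompl A f) : (x - ψ (adicComplProj A f x)).val 1 = 0 := by
  have hsec : adicComplProj A f (ψ (adicComplProj A f x)) = adicComplProj A f x :=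
    RingHom.congr_fun hψ _
  have hzero : adicComplProj A f (x - ψ (adicComplProj A f x)) = 0 := by
    rw [(adicComplProj A f).map_sub, hsec, sub_self]
  have hrepr : adicComplProj A f (x - ψ (adicComplProj A f x)) =
      Ideal.Quotient.factor (S := Ideal.span {f ^ 1}) (T := Ideal.span {f})
        (le_of_eq (by rw [pow_one])) ((x - ψ (adicComplProj A f x)).val 1) := rfl
  rw [hrepr] at hzero
  obtain ⟨r, hr⟩ := Ideal.Quotient.mk_surjective ((x - ψ (adicComplProj A f x)).val 1)
  rw [← hr, Ideal.Quotient.factor_mk, Ideal.Quotient.eq_zero_iff_mem,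
    Ideal.mem_span_singleton] at hzero
  rw [← hr, Ideal.Quotient.eq_zero_iff_mem, Ideal.mem_span_singleton, pow_one]
  exact hzero

noncomputable def stepx (hf : f ≠ 0) (hψ : (adicComplProj A f).comp ψ = RingHom.id _)
    (x : adicCompl A f) : adicCompl A f :=
  Classical.choose (exists_shift f hf (x - ψ (adicComplProj A f x)) (sub_val1 f ψ hψ x))

lemma stepx_spec (hf : f ≠ 0) (hψ : (adicComplProj A f).comp ψ = RingHom.id _)
    (x : adicCompl A f) (ν : ℕ) :
    mulf f ν ((stepx f ψ hf hψ x).val ν) = (x - ψ (adicComplProj A f x)).val (ν + 1) :=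
  Classical.choose_spec (exists_shift f hf (x - ψ (adicComplProj A f x)) (sub_val1 f ψ hψ x)) ν

noncomputable def bcoef (hf : f ≠ 0) (hψ : (adicComplProj A f).comp ψ = RingHom.id _)
    (μ : ℕ) : adicCompl A f → (A ⧸ Ideal.span {f}) :=
  Nat.rec (fun x => adicComplProj A f x) (fun _ ih x => ih (stepx f ψ hf hψ x)) μ

lemma main (hf : f ≠ 0) (hψ : (adicComplProj A f).comp ψ = RingHom.id _) :
    ∀ ν (x : adicCompl A f),
    x.val ν = ∑ μ ∈ Finset.range ν,
      (ψ (bcoef f ψ hf hψ μ x)).val ν * (Ideal.Quotient.mk (Ideal.span {f ^ ν})) f ^ μ := by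
  intro ν
  induction ν with
  | zero =>
      intro x
      have : Subsingleton (A ⧸ Ideal.span {f ^ 0}) := by
        rw [Ideal.Quotient.subsingleton_iff]
        simp [Ideal.span_singleton_one]
      exact Subsingleton.elim _ _
  | succ ν ih =>
      intro x
      rw [Finset.sum_range_succ']
      have hterm0 : (ψ (bcoef f ψ hf hψ 0 x)).val (ν + 1) *
          (Ideal.Quotient.mk (Ideal.span {f ^ (ν + 1)})) f ^ 0
          = (ψ (adicComplProj A f x)).val (ν + 1) := by
        rw [pow_zero, mul_one]; rfl
      have htail : ∀ μ ∈ Finset.range ν,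
          (ψ (bcoef f ψ hf hψ (μ + 1) x)).val (ν + 1) *
            (Ideal.Quotient.mk (Ideal.span {f ^ (ν + 1)})) f ^ (μ + 1)
          = (Ideal.Quotient.mk (Ideal.span {f ^ (ν + 1)})) f *
              ((ψ (bcoef f ψ hf hψ μ (stepx f ψ hf hψ x))).val (ν + 1) *
                (Ideal.Quotient.mk (Ideal.span {f ^ (ν + 1)})) f ^ μ) := by
        intro μ _
        have hb : bcoef f ψ hf hψ (μ + 1) x = bcoef f ψ hf hψ μ (stepx f ψ hf hψ x) := rfl
        rw [hb]
        ring
      rw [Finset.sum_congr rfl htail, ← Finset.mul_sum, hterm0]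
      set S := ∑ μ ∈ Finset.range ν,
        (ψ (bcoef f ψ hf hψ μ (stepx f ψ hf hψ x))).val (ν + 1) *
          (Ideal.Quotient.mk (Ideal.span {f ^ (ν + 1)})) f ^ μ with hSdef
      have hS : fac f ν S = (stepx f ψ hf hψ x).val ν := by
        rw [hSdef, map_sum, ih (stepx f ψ hf hψ x)]
        refine Finset.sum_congr rfl fun μ _ => ?_
        rw [map_mul, map_pow, fac_mk, fac_val]
      have hmul : (Ideal.Quotient.mk (Ideal.span {f ^ (ν + 1)})) f * S
          = x.val (ν + 1) - (ψ (adicComplProj A f x)).val (ν + 1) := by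
        rw [← mulf_fac f ν S, hS, stepx_spec f ψ hf hψ x ν]
        show ((x - ψ (adicComplProj A f x)) : adicCompl A f).val (ν + 1) = _
        rw [AddSubgroupClass.coe_sub, Pi.sub_apply]
      rw [hmul]
      ring

lemma Phi0_surjective (hf : f ≠ 0) (hψ : (adicComplProj A f).comp ψ = RingHom.id _) :
    Function.Surjective (Phi0 f ψ) := by
  intro x
  refine ⟨PowerSeries.mk (fun μ => bcoef f ψ hf hψ μ x), ?_⟩
  apply Subtype.ext; funext ν
  show preFun f ψ _ ν = x.val ν
  rw [preFun_eq, main f ψ hf hψ ν x]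
  refine Finset.sum_congr rfl fun μ _ => ?_
  rw [PowerSeries.coeff_mk]

end Lemma36

/-- Lemma 3.6 (Grothendieck's lemma, without degree bounds): if `ψ : B → Â` is a ring
section of the projection `Â → B`, then `∑ν bν T^ν ↦ ∑ν ψ(bν) f^ν` is a ring
isomorphism `B[[T]] ≅ Â`. -/
theorem powerSeries_iso_adicCompletion
    (n : ℕ) (f : MvPolynomial (Fin n) ℂ) (hsf : Squarefree f)
    (hsm : ∀ x : Fin n → ℂ,
      ¬ (eval x f = 0 ∧ ∀ i : Fin n, eval x (pderiv i f) = 0))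
    (ψ : (MvPolynomial (Fin n) ℂ ⧸ Ideal.span {f}) →+*
        adicCompl (MvPolynomial (Fin n) ℂ) f)
    (hψ : (adicComplProj (MvPolynomial (Fin n) ℂ) f).comp ψ = RingHom.id _) :
    ∃ Φ : PowerSeries (MvPolynomial (Fin n) ℂ ⧸ Ideal.span {f}) ≃+*
        adicCompl (MvPolynomial (Fin n) ℂ) f,
      ∀ (g : PowerSeries (MvPolynomial (Fin n) ℂ ⧸ Ideal.span {f})) (ν : ℕ),
        (Φ g).val ν = ∑ μ ∈ Finset.range ν,
          (ψ (PowerSeries.coeff μ g)).val ν *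
            (Ideal.Quotient.mk (Ideal.span {f ^ ν}) f) ^ μ := by
  have hf : f ≠ 0 := by
    intro h
    exact hsm 0 (by subst h; simp)
  refine ⟨RingEquiv.ofBijective (Lemma36.Phi0 f ψ)
    ⟨Lemma36.Phi0_injective f ψ hf hψ, Lemma36.Phi0_surjective f ψ hf hψ⟩, ?_⟩
  intro g ν
  exact Lemma36.preFun_eq f ψ g ν
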